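/- For r ≥ 3 and 2 ≤ n ≤ r − 1, R_3(nK_r) ≥ (r−1)(R_2(K_r) − 1) + n: there is a 3-edge-coloring of the complete graph on (r−1)(R_2(K_r)−1) + n − 1 vertices with no monochromatic copy of n disjoint K_r's. -/

import Mathlib

open SimpleGraph

/-- A rainbow path on `ℓ` vertices in an edge coloring `c` of the complete graph on `Fin n`:
an injective sequence of `ℓ` vertices whose `ℓ - 1` consecutive edges get pairwise
distinct colors. -/
def hasRainbowPath (ℓ : ℕ) {n : ℕ} {α : Type*} (c : Sym2 (Fin n) → α) : Prop :=
  ∃ f : Fin ℓ ↪ Fin n, Function.Injective (fun i : Fin (ℓ - 1) =>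
    c s(f ⟨i.1, by have := i.2; omega⟩, f ⟨i.1 + 1, by have := i.2; omega⟩))

/-- A copy of the graph `H` all of whose edges receive the color `i`. -/
def hasCopyInColor {V : Type*} (H : SimpleGraph V) {n : ℕ} {α : Type*}
    (c : Sym2 (Fin n) → α) (i : α) : Prop :=
  ∃ f : V ↪ Fin n, ∀ u v, H.Adj u v → c s(f u, f v) = i

/-- A monochromatic copy of the graph `H`. -/
def hasMonoCopy {V : Type*} (H : SimpleGraph V) {n : ℕ} {α : Type*}
    (c : Sym2 (Fin n) → α) : Prop :=
  ∃ i, hasCopyInColor H c i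

/-- The graph formed by the edges of color `i`. -/
def colorGraph {n : ℕ} {α : Type*} (c : Sym2 (Fin n) → α) (i : α) : SimpleGraph (Fin n) :=
  SimpleGraph.fromEdgeSet {e | c e = i ∧ ¬ e.IsDiag}

/-- A copy, in color `i`, of some connected graph containing `H` as a subgraph:
equivalently, a copy of `H` in color `i` whose vertices all lie in a single
connected component of the graph of color-`i` edges. -/
def hasConnCopyInColor {V : Type*} (H : SimpleGraph V) {n : ℕ} {α : Type*}
    (c : Sym2 (Fin n) → α) (i : α) : Prop :=
  ∃ f : V ↪ Fin n, (∀ u v, H.Adj u v → c s(f u, f v) = i) ∧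
    ∀ u v, (colorGraph c i).Reachable (f u) (f v)

/-- A monochromatic copy of some connected graph containing `H` as a subgraph. -/
def hasMonoConnCopy {V : Type*} (H : SimpleGraph V) {n : ℕ} {α : Type*}
    (c : Sym2 (Fin n) → α) : Prop :=
  ∃ i, hasConnCopyInColor H c i

/-- The `k`-color Ramsey number `R_k(H)`. -/
noncomputable def ramsey {V : Type*} (H : SimpleGraph V) (k : ℕ) : ℕ :=
  sInf {n | ∀ c : Sym2 (Fin n) → Fin k, hasMonoCopy H c}

/-- The asymmetric two-color Ramsey number `R(F, G)`. -/
noncomputable def ramseyPair {V W : Type*} (F : SimpleGraph V) (G : SimpleGraph W) : ℕ :=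
  sInf {n | ∀ c : Sym2 (Fin n) → Fin 2, hasCopyInColor F c 0 ∨ hasCopyInColor G c 1}

/-- `R_2(𝒞(H))`, the two-color Ramsey number of the family of connected graphs
containing `H` as a subgraph. -/
noncomputable def ramseyConn {V : Type*} (H : SimpleGraph V) : ℕ :=
  sInf {n | ∀ c : Sym2 (Fin n) → Fin 2, hasMonoConnCopy H c}

/-- `R(𝒞(F), G)`, the asymmetric Ramsey number: red member of the family of
connected graphs containing `F`, versus blue copy of `G`. -/
noncomputable def ramseyConnPair {V W : Type*} (F : SimpleGraph V) (G : SimpleGraph W) : ℕ :=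
  sInf {n | ∀ c : Sym2 (Fin n) → Fin 2, hasConnCopyInColor F c 0 ∨ hasCopyInColor G c 1}

/-- The Gallai-Ramsey number `gr_k(P_ℓ : H)`: least `n` such that every `k`-coloring of
the edges of `K_n` contains a rainbow path on `ℓ` vertices or a monochromatic copy of `H`. -/
noncomputable def gallaiRamsey (ℓ : ℕ) {V : Type*} (H : SimpleGraph V) (k : ℕ) : ℕ :=
  sInf {n | ∀ c : Sym2 (Fin n) → Fin k, hasRainbowPath ℓ c ∨ hasMonoCopy H c}

/-- `m` vertex-disjoint copies of `H`. -/
def nCopies (m : ℕ) {V : Type*} (H : SimpleGraph V) : SimpleGraph (Fin m × V) where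
  Adj a b := a.1 = b.1 ∧ H.Adj a.2 b.2
  symm := ⟨by rintro a b ⟨h1, h2⟩; exact ⟨h1.symm, h2.symm⟩⟩
  loopless := ⟨by rintro a ⟨-, h⟩; exact h.ne rfl⟩

/-- `s(G)` with respect to `r` colors: the minimum size of a color class over all
proper vertex colorings of `G` with `r` colors. -/
noncomputable def minClass {V : Type*} (G : SimpleGraph V) (r : ℕ) : ℕ :=
  sInf {n | ∃ (C : G.Coloring (Fin r)) (i : Fin r), n = Nat.card {v : V | C v = i}}

lemma snoc_inj {s M : ℕ} (g : Fin s → Fin M) (v : Fin M) (hg : Function.Injective g)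
    (hv : ∀ u, g u ≠ v) : Function.Injective (Fin.snoc g v : Fin (s+1) → Fin M) := by
  intro a b hab
  induction a using Fin.lastCases <;> induction b using Fin.lastCases <;>
      simp only [Fin.snoc_castSucc, Fin.snoc_last] at hab
  · rfl
  · exact absurd hab.symm (hv _)
  · exact absurd hab (hv _)
  · exact congrArg Fin.castSucc (hg hab)

lemma ramsey_exists_aux : ∀ (N k : ℕ) (t : Fin k → ℕ), (∑ i, t i) ≤ N →
    ∃ M, ∀ c : Sym2 (Fin M) → Fin k, ∃ i , ∃ f : Fin (t i) ↪ Fin M,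
      ∀ u v : Fin (t i), u ≠ v → c s(f u, f v) = i := by
  intro N
  induction N with
  | zero =>
    intro k t ht
    rcases Nat.eq_zero_or_pos k with hk | hk
    · subst hk
      exact ⟨1, fun c => ((c s(0,0)).elim0)⟩
    · have h0 : t ⟨0, hk⟩ = 0 :=
        Finset.sum_eq_zero_iff.mp (Nat.le_zero.mp ht) ⟨0, hk⟩ (Finset.mem_univ _)
      exact ⟨0, fun c => ⟨⟨0, hk⟩, ⟨⟨fun u => absurd u.2 (by omega),
        fun u => absurd u.2 (by omega)⟩, fun u => absurd u.2 (by omega)⟩⟩⟩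
  | succ N ih =>
    intro k t ht
    rcases Nat.eq_zero_or_pos k with hk | hk
    · subst hk
      exact ⟨1, fun c => ((c s(0,0)).elim0)⟩
    by_cases h0 : ∃ i, t i = 0
    · obtain ⟨i, hi⟩ := h0
      exact ⟨0, fun c => ⟨i, ⟨⟨fun u => absurd u.2 (by omega), fun u => absurd u.2 (by omega)⟩,
        fun u => absurd u.2 (by omega)⟩⟩⟩
    push_neg at h0
    have hM : ∀ i : Fin k, ∃ M, ∀ c : Sym2 (Fin M) → Fin k,
        ∃ j, ∃ f : Fin (Function.update t i (t i - 1) j) ↪ Fin M,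
          ∀ u v, u ≠ v → c s(f u, f v) = j := by
      intro i
      apply ih
      have h1 : t i ≠ 0 := h0 i
      have heq : ∑ j, t j = t i + ∑ x ∈ Finset.univ \ {i}, t x :=
        Finset.sum_eq_add_sum_sdiff_singleton_of_mem (Finset.mem_univ i) t
      rw [Finset.sum_update_of_mem (Finset.mem_univ i)]
      omega
    choose M hMprop using hM
    set T := ∑ i, M i with hT
    refine ⟨T + 1, fun c => ?_⟩
    set col : Fin T → Fin k := fun u => c s(u.castSucc, Fin.last T) with hcol
    -- pigeonhole: some color class has size ≥ M i
    have hpig : ∃ i, M i ≤ (Finset.univ.filter (fun u => col u = i)).card := by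
      by_contra hcon
      push_neg at hcon
      have hcard : (Finset.univ : Finset (Fin T)).card
          = ∑ i, (Finset.univ.filter (fun u => col u = i)).card :=
        Finset.card_eq_sum_card_fiberwise (fun x _ => Finset.mem_univ (col x))
      have hlt : ∑ i, (Finset.univ.filter (fun u => col u = i)).card < ∑ i, M i :=
        Finset.sum_lt_sum_of_nonempty ⟨⟨0, hk⟩, Finset.mem_univ _⟩ (fun i _ => hcon i)
      simp [Finset.card_univ] at hcard
      omega
    obtain ⟨i, hi⟩ := hpig
    obtain ⟨S, hSsub, hScard⟩ := Finset.exists_subset_card_eq hi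
    set e : Fin (M i) ↪o Fin T := S.orderEmbOfFin hScard with he
    have hecol : ∀ u, col (e u) = i := by
      intro u
      have := hSsub (S.orderEmbOfFin_mem hScard u)
      simpa using this
    set c' : Sym2 (Fin (M i)) → Fin k :=
      fun e' => c (e'.map (fun u => (e u).castSucc)) with hc'
    obtain ⟨j, f, hf⟩ := hMprop i c'
    by_cases hji : j = i
    · subst hji
      -- extend with the last vertex
      have hupd : Function.update t j (t j - 1) j = t j - 1 := Function.update_self _ _ _
      obtain ⟨s, hs⟩ : ∃ s, t j = s + 1 := ⟨t j - 1, by have := h0 j; omega⟩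
      have hdom : Function.update t j (t j - 1) j = s := by omega
      set g : Fin s → Fin (T + 1) :=
        fun u => (e (f (finCongr hdom.symm u))).castSucc with hg
      have hginj : Function.Injective g := by
        intro a b hab
        have h1 : f (finCongr hdom.symm a) = f (finCongr hdom.symm b) := by
          apply e.injective
          exact Fin.castSucc_injective _ hab
        have h2 := congrArg Fin.val (f.injective h1); exact Fin.ext h2
      have hgne : ∀ u, g u ≠ Fin.last T := fun u => (Fin.castSucc_lt_last _).ne
      have hsnoc : Function.Injective (Fin.snoc g (Fin.last T) : Fin (s+1) → Fin (T+1)) :=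
        snoc_inj g (Fin.last T) hginj hgne
      have hmono : ∀ u' v' : Fin (s + 1), u' ≠ v' →
          c s((Fin.snoc g (Fin.last T) : Fin (s+1) → Fin (T+1)) u',
            (Fin.snoc g (Fin.last T) : Fin (s+1) → Fin (T+1)) v') = j := by
        intro u' v' huv
        induction u' using Fin.lastCases with
        | last =>
          induction v' using Fin.lastCases with
          | last => exact absurd rfl huv
          | cast b =>
            rw [Fin.snoc_last, Fin.snoc_castSucc, Sym2.eq_swap]
            exact hecol _
        | cast a =>
          induction v' using Fin.lastCases with
          | last =>
            rw [Fin.snoc_last, Fin.snoc_castSucc]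
            exact hecol _
          | cast b =>
            rw [Fin.snoc_castSucc, Fin.snoc_castSucc]
            have hab : a ≠ b := fun h => huv (by rw [h])
            have hne : finCongr hdom.symm a ≠ finCongr hdom.symm b :=
              fun h => hab (by have h2 := congrArg Fin.val h; exact Fin.ext h2)
            exact hf _ _ hne
      refine ⟨j, ⟨⟨fun u => (Fin.snoc g (Fin.last T) : Fin (s+1) → Fin (T+1)) (finCongr hs u),
        ?_⟩, ?_⟩⟩
      · intro a b hab
        have h2 := hsnoc hab
        have h3 := congrArg Fin.val h2; exact Fin.ext h3
      · intro u v huv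
        exact hmono _ _ (fun h => huv (by have h2 := congrArg Fin.val h; exact Fin.ext h2))
    · have hcast : t j = Function.update t i (t i - 1) j :=
        (Function.update_of_ne hji _ _).symm
      refine ⟨j, ⟨⟨fun u => (e (f (finCongr hcast u))).castSucc, ?_⟩, ?_⟩⟩
      · intro a b hab
        simp only at hab
        have h1 : f _ = f _ := e.injective (Fin.castSucc_injective _ hab)
        have h2 := congrArg Fin.val (f.injective h1); exact Fin.ext h2
      · intro u v huv
        have hne : finCongr hcast u ≠ finCongr hcast v :=
          fun h => huv (by have h2 := congrArg Fin.val h; exact Fin.ext h2)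
        have h2 := hf _ _ hne
        simp only [hc', Sym2.map_pair_eq] at h2
        exact h2

-- auxiliary
lemma mono_up {V : Type*} (H : SimpleGraph V) {a b k : ℕ} (hab : a ≤ b)
    (ha : ∀ c : Sym2 (Fin a) → Fin k, hasMonoCopy H c)
    (c : Sym2 (Fin b) → Fin k) : hasMonoCopy H c := by
  obtain ⟨i, f, hf⟩ := ha (fun e => c (e.map (Fin.castLE hab)))
  refine ⟨i, f.trans (Fin.castLEEmb hab), fun u v h => ?_⟩
  have h2 := hf u v h
  simpa [Sym2.map_pair_eq] using h2

def blockColor (m B NN : ℕ) (hm : 0 < m) (c₀ : Sym2 (Fin m) → Fin 2)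
    (x y : Fin NN) : Fin 3 :=
  if x.1 < B ∧ y.1 < B ∧ x.1 / m = y.1 / m then
    Fin.castLE (by omega) (c₀ s(⟨x.1 % m, Nat.mod_lt _ hm⟩, ⟨y.1 % m, Nat.mod_lt _ hm⟩))
  else 2

lemma blockColor_symm (m B NN : ℕ) (hm : 0 < m) (c₀ : Sym2 (Fin m) → Fin 2)
    (x y : Fin NN) : blockColor m B NN hm c₀ x y = blockColor m B NN hm c₀ y x := by
  unfold blockColor
  split_ifs with h1 h2 h2
  · rw [Sym2.eq_swap]
  · exact absurd ⟨h1.2.1, h1.1, h1.2.2.symm⟩ h2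
  · exact absurd ⟨h2.2.1, h2.1, h2.2.2.symm⟩ h1
  · rfl

lemma blockColor_pos (m B NN : ℕ) (hm : 0 < m) (c₀ : Sym2 (Fin m) → Fin 2)
    (x y : Fin NN) (h : x.1 < B ∧ y.1 < B ∧ x.1 / m = y.1 / m) :
    blockColor m B NN hm c₀ x y =
      Fin.castLE (by omega) (c₀ s(⟨x.1 % m, Nat.mod_lt _ hm⟩, ⟨y.1 % m, Nat.mod_lt _ hm⟩)) :=
  if_pos h

lemma blockColor_neg (m B NN : ℕ) (hm : 0 < m) (c₀ : Sym2 (Fin m) → Fin 2)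
    (x y : Fin NN) (h : ¬ (x.1 < B ∧ y.1 < B ∧ x.1 / m = y.1 / m)) :
    blockColor m B NN hm c₀ x y = 2 :=
  if_neg h

lemma construction (r n m B NN : ℕ) (hr : 3 ≤ r) (hn : 2 ≤ n)
    (hB : B = (r - 1) * m) (hNN : NN = B + n - 1)
    (c₀ : Sym2 (Fin m) → Fin 2)
    (hc₀ : ¬ hasMonoCopy (⊤ : SimpleGraph (Fin r)) c₀) :
    ∃ c : Sym2 (Fin NN) → Fin 3, ¬ hasMonoCopy (nCopies n (⊤ : SimpleGraph (Fin r))) c := by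
  rcases Nat.eq_zero_or_pos m with hm | hm
  · -- m = 0 : NN = n - 1 < n * r, no embedding at all
    refine ⟨fun _ => 2, ?_⟩
    rintro ⟨i, f, -⟩
    have hcard := Fintype.card_le_of_injective f f.injective
    simp [Fintype.card_prod] at hcard
    have h1 : n ≤ n * r := Nat.le_mul_of_pos_right n (by omega)
    subst hB hNN hm
    simp at hcard
    omega
  · refine ⟨Sym2.lift ⟨blockColor m B NN hm c₀, blockColor_symm m B NN hm c₀⟩, ?_⟩
    rintro ⟨i, f, hf⟩
    have hedge : ∀ (a : Fin n) (u v : Fin r), u ≠ v →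
        blockColor m B NN hm c₀ (f (a, u)) (f (a, v)) = i := by
      intro a u v huv
      have h := hf (a, u) (a, v) ⟨rfl, by simpa using huv⟩
      rwa [Sym2.lift_mk] at h
    by_cases hi : i = 2
    · -- green case
      subst hi
      have hhigh : ∀ a : Fin n, ∃ u : Fin r, B ≤ (f (a, u)).1 := by
        intro a
        by_contra hc
        push_neg at hc
        have hqlt : ∀ u : Fin r, (f (a, u)).1 / m < r - 1 := by
          intro u
          rw [Nat.div_lt_iff_lt_mul hm]
          have := hc u
          omega
        obtain ⟨u, v, huv, hq⟩ := Fintype.exists_ne_map_eq_of_card_lt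
          (fun u : Fin r => (⟨(f (a, u)).1 / m, hqlt u⟩ : Fin (r - 1)))
          (by simp; omega)
        have h2 := hedge a u v huv
        rw [blockColor_pos m B NN hm c₀ _ _
          ⟨hc u, hc v, by simpa using congrArg Fin.val hq⟩] at h2
        have h3 := congrArg Fin.val h2
        have h4 := (c₀ s(⟨(f (a,u)).1 % m, Nat.mod_lt _ hm⟩,
          ⟨(f (a,v)).1 % m, Nat.mod_lt _ hm⟩)).2
        simp [Fin.castLE] at h3
        omega
      choose w hw using hhigh
      have hinj : Function.Injective
          (fun a : Fin n => (⟨(f (a, w a)).1 - B, by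
            have h1 := (f (a, w a)).2
            have h2 := hw a
            omega⟩ : Fin (n - 1))) := by
        intro a b hab
        by_contra hne
        have h1 : f (a, w a) ≠ f (b, w b) :=
          fun h => hne (congrArg Prod.fst (f.injective h))
        have h2 := congrArg Fin.val hab
        simp at h2
        have h3 := hw a
        have h4 := hw b
        exact h1 (Fin.ext (by omega))
      have := Fintype.card_le_of_injective _ hinj
      simp at this
      omega
    · -- monochromatic red/blue K_r inside a block
      have hi2 : i.1 < 2 := by
        have := i.2
        have : i.1 ≠ 2 := fun h => hi (Fin.ext h)
        omega
      set a : Fin n := ⟨0, by omega⟩ with ha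
      have hcond : ∀ u v : Fin r, u ≠ v →
          ((f (a, u)).1 < B ∧ (f (a, v)).1 < B ∧ (f (a, u)).1 / m = (f (a, v)).1 / m) := by
        intro u v huv
        by_contra hcc
        have h2 := hedge a u v huv
        rw [blockColor_neg m B NN hm c₀ _ _ hcc] at h2
        rw [← h2] at hi2
        simp at hi2
      have hFinj : Function.Injective
          (fun u : Fin r => (⟨(f (a, u)).1 % m, Nat.mod_lt _ hm⟩ : Fin m)) := by
        intro u v huv
        by_contra hne
        have h1 := (hcond u v hne).2.2
        have h2 : (f (a, u)).1 % m = (f (a, v)).1 % m := congrArg Fin.val huv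
        have h3 : (f (a, u)).1 = (f (a, v)).1 := by
          have e1 := Nat.div_add_mod (f (a, u)).1 m
          have e2 := Nat.div_add_mod (f (a, v)).1 m
          rw [← h1] at e2
          omega
        exact hne (congrArg Prod.snd (f.injective (Fin.ext h3)))
      refine hc₀ ⟨⟨i.1, hi2⟩, ⟨_, hFinj⟩, fun u v huv => ?_⟩
      have huv' : u ≠ v := by simpa using huv
      have h2 := hedge a u v huv'
      rw [blockColor_pos m B NN hm c₀ _ _ (hcond u v huv')] at h2
      have h3 := congrArg Fin.val h2
      simp [Fin.castLE] at h3
      exact Fin.ext h3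

/-- For `r ≥ 3` and `2 ≤ n ≤ r − 1`, `R₃(nK_r) ≥ (r−1)(R₂(K_r) − 1) + n`: there is a
3-coloring of the complete graph on `(r−1)(R₂(K_r)−1) + n − 1` vertices with no
monochromatic `nK_r`. -/
theorem stmt13 (r n : ℕ) (hr : 3 ≤ r) (hn : 2 ≤ n) (hnr : n ≤ r - 1) :
    (r - 1) * (ramsey (⊤ : SimpleGraph (Fin r)) 2 - 1) + n ≤
      ramsey (nCopies n (⊤ : SimpleGraph (Fin r))) 3 ∧
    ∃ c : Sym2 (Fin ((r - 1) * (ramsey (⊤ : SimpleGraph (Fin r)) 2 - 1) + n - 1)) → Fin 3,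
      ¬ hasMonoCopy (nCopies n (⊤ : SimpleGraph (Fin r))) c := by
  -- Step 1: a 2-coloring of `K_{R₂(K_r)−1}` with no monochromatic `K_r`
  have hC : ∃ c₀ : Sym2 (Fin (ramsey (⊤ : SimpleGraph (Fin r)) 2 - 1)) → Fin 2,
      ¬ hasMonoCopy (⊤ : SimpleGraph (Fin r)) c₀ := by
    by_contra hcon
    push_neg at hcon
    have hle : ramsey (⊤ : SimpleGraph (Fin r)) 2 ≤ ramsey (⊤ : SimpleGraph (Fin r)) 2 - 1 :=
      Nat.sInf_le hcon
    obtain ⟨i, f, -⟩ := hcon (fun _ => 0)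
    have hv := (f ⟨0, by omega⟩).2
    omega
  obtain ⟨c₀, hc₀⟩ := hC
  obtain ⟨c, hc⟩ := construction r n _ _ _ hr hn rfl rfl c₀ hc₀
  -- Step 2: the 3-color Ramsey set for `nK_r` is nonempty
  have hS3 : ∃ M, ∀ c : Sym2 (Fin M) → Fin 3,
      hasMonoCopy (nCopies n (⊤ : SimpleGraph (Fin r))) c := by
    obtain ⟨M, hM⟩ := ramsey_exists_aux (3 * (n * r)) 3 (fun _ => n * r) (by simp)
    refine ⟨M, fun c => ?_⟩
    obtain ⟨i, f, hf⟩ := hM c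
    refine ⟨i, finProdFinEquiv.toEmbedding.trans f, ?_⟩
    rintro ⟨a, u⟩ ⟨b, v⟩ ⟨hab, huv⟩
    have huv' : u ≠ v := by simpa using huv
    exact hf _ _ (fun h => huv' (congrArg Prod.snd (finProdFinEquiv.injective h)))
  refine ⟨?_, ⟨c, hc⟩⟩
  obtain ⟨M, hM⟩ := hS3
  have hMmem : M ∈ {k : ℕ | ∀ c : Sym2 (Fin k) → Fin 3,
      hasMonoCopy (nCopies n (⊤ : SimpleGraph (Fin r))) c} := hM
  apply le_csInf ⟨M, hMmem⟩
  intro b hb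
  by_contra hlt
  push_neg at hlt
  have hble : b ≤ (r - 1) * (ramsey (⊤ : SimpleGraph (Fin r)) 2 - 1) + n - 1 := by omega
  exact hc (mono_up _ hble hb c)
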